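/- Each component of the two-dimensional Stokeslet velocity field is harmonic in the direction of Δ applied twice (biharmonic): for fixed y ∈ ℝ² and σ ∈ ℝ², the field u(x) = (-log‖x−y‖) σ + (((x−y)·σ)/‖x−y‖²)(x−y) satisfies Δ(Δu) = 0 componentwise for x ≠ y. -/

import Mathlib

noncomputable def pd1 (f : ℝ × ℝ → ℝ) (x : ℝ × ℝ) : ℝ :=
  deriv (fun t => f (t, x.2)) x.1

noncomputable def pd2 (f : ℝ × ℝ → ℝ) (x : ℝ × ℝ) : ℝ :=
  deriv (fun t => f (x.1, t)) x.2

noncomputable def lap (f : ℝ × ℝ → ℝ) : ℝ × ℝ → ℝ :=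
  fun x => pd1 (pd1 f) x + pd2 (pd2 f) x

noncomputable def divg (u : ℝ × ℝ → ℝ × ℝ) (x : ℝ × ℝ) : ℝ :=
  pd1 (fun z => (u z).1) x + pd2 (fun z => (u z).2) x

/-- Euclidean dot product on `ℝ × ℝ`. -/
def dot (a b : ℝ × ℝ) : ℝ := a.1 * b.1 + a.2 * b.2

/-- Euclidean norm on `ℝ × ℝ`. -/
noncomputable def nrm (a : ℝ × ℝ) : ℝ := Real.sqrt (a.1 ^ 2 + a.2 ^ 2)

/-- Squared Euclidean norm on `ℝ × ℝ`. -/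
def nrmsq (a : ℝ × ℝ) : ℝ := a.1 ^ 2 + a.2 ^ 2

/-- The 2D Stokeslet velocity field with singularity at `y` and strength `σ`. -/
noncomputable def stokeslet (y σ : ℝ × ℝ) (x : ℝ × ℝ) : ℝ × ℝ :=
  (-Real.log (nrm (x - y))) • σ + (dot (x - y) σ / nrmsq (x - y)) • (x - y)

/-- The 2D rotlet velocity field with singularity at `c` and strength `μ`. -/
noncomputable def rotlet (c : ℝ × ℝ) (μ : ℝ) (x : ℝ × ℝ) : ℝ × ℝ :=
  (μ / nrmsq (x - c)) • ((x - c).2, -(x - c).1)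


section Aux

variable (s1 s2 α β τ : ℝ)

/-- closed form of the stokeslet component in shifted coordinates -/
noncomputable def Fn (a b : ℝ) : ℝ :=
  -(τ / 2) * Real.log (a ^ 2 + b ^ 2) +
    (α * a + β * b) * (s1 * a + s2 * b) / (a ^ 2 + b ^ 2)

noncomputable def Fa (a b : ℝ) : ℝ :=
  -τ * a / (a ^ 2 + b ^ 2)
    + (α * (s1 * a + s2 * b) + (α * a + β * b) * s1) / (a ^ 2 + b ^ 2)
    - 2 * a * (α * a + β * b) * (s1 * a + s2 * b) / (a ^ 2 + b ^ 2) ^ 2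

noncomputable def Fb (a b : ℝ) : ℝ :=
  -τ * b / (a ^ 2 + b ^ 2)
    + (β * (s1 * a + s2 * b) + (α * a + β * b) * s2) / (a ^ 2 + b ^ 2)
    - 2 * b * (α * a + β * b) * (s1 * a + s2 * b) / (a ^ 2 + b ^ 2) ^ 2

noncomputable def Ln (a b : ℝ) : ℝ :=
  2 * (α * s1 + β * s2) / (a ^ 2 + b ^ 2)
    - 4 * (α * a + β * b) * (s1 * a + s2 * b) / (a ^ 2 + b ^ 2) ^ 2

noncomputable def La (a b : ℝ) : ℝ :=
  -4 * (α * s1 + β * s2) * a / (a ^ 2 + b ^ 2) ^ 2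
    - 4 * (α * (s1 * a + s2 * b) + (α * a + β * b) * s1) / (a ^ 2 + b ^ 2) ^ 2
    + 16 * a * (α * a + β * b) * (s1 * a + s2 * b) / (a ^ 2 + b ^ 2) ^ 3

noncomputable def Lb (a b : ℝ) : ℝ :=
  -4 * (α * s1 + β * s2) * b / (a ^ 2 + b ^ 2) ^ 2
    - 4 * (β * (s1 * a + s2 * b) + (α * a + β * b) * s2) / (a ^ 2 + b ^ 2) ^ 2
    + 16 * b * (α * a + β * b) * (s1 * a + s2 * b) / (a ^ 2 + b ^ 2) ^ 3

lemma sq_add (b : ℝ) (a : ℝ) : HasDerivAt (fun t : ℝ => t ^ 2 + b ^ 2) (2 * a) a := by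
  simpa using (hasDerivAt_pow 2 a).add_const (b ^ 2)

lemma sq_add' (a : ℝ) (b : ℝ) : HasDerivAt (fun t : ℝ => a ^ 2 + t ^ 2) (2 * b) b := by
  simpa using ((hasDerivAt_pow 2 b).const_add (a ^ 2))

lemma lin (c d : ℝ) (a : ℝ) : HasDerivAt (fun t : ℝ => c * t + d) c a := by
  simpa using ((hasDerivAt_id a).const_mul c).add_const d

lemma lin' (c d : ℝ) (a : ℝ) : HasDerivAt (fun t : ℝ => d + c * t) c a := by
  simpa using (((hasDerivAt_id a).const_mul c).const_add d)

lemma hasDerivAt_Fn (a b : ℝ) (h : a ^ 2 + b ^ 2 ≠ 0) :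
    HasDerivAt (fun t => Fn s1 s2 α β τ t b) (Fa s1 s2 α β τ a b) a := by
  have hq := sq_add b a
  have hlog := hq.log h
  have hn : HasDerivAt (fun t : ℝ => (α * t + β * b) * (s1 * t + s2 * b))
      (α * (s1 * a + s2 * b) + (α * a + β * b) * s1) a :=
    (lin α (β * b) a).mul (lin s1 (s2 * b) a)
  have H := (hlog.const_mul (-(τ / 2))).add (hn.div hq h)
  unfold Fn Fa
  refine H.congr_deriv ?_
  field_simp
  ring

lemma hasDerivAt_Fn' (a b : ℝ) (h : a ^ 2 + b ^ 2 ≠ 0) :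
    HasDerivAt (fun t => Fn s1 s2 α β τ a t) (Fb s1 s2 α β τ a b) b := by
  have hq := sq_add' a b
  have hlog := hq.log h
  have hn := (lin' β (α * a) b).mul (lin' s2 (s1 * a) b)
  have H := (hlog.const_mul (-(τ / 2))).add (hn.div hq h)
  unfold Fn Fb
  refine H.congr_deriv ?_
  simp only [Pi.add_apply, Pi.mul_apply, id]
  field_simp
  ring

lemma hasDerivAt_Ln (a b : ℝ) (h : a ^ 2 + b ^ 2 ≠ 0) :
    HasDerivAt (fun t => Ln s1 s2 α β t b) (La s1 s2 α β a b) a := by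
  have hq := sq_add b a
  have hq2 : HasDerivAt (fun t : ℝ => (t ^ 2 + b ^ 2) ^ 2)
      (2 * (a ^ 2 + b ^ 2) ^ 1 * (2 * a)) a := hq.pow 2
  have h2 : (a ^ 2 + b ^ 2) ^ 2 ≠ 0 := pow_ne_zero _ h
  have hn := ((lin α (β * b) a).const_mul 4).mul (lin s1 (s2 * b) a)
  have hc : HasDerivAt (fun t : ℝ => 2 * (α * s1 + β * s2) / (t ^ 2 + b ^ 2))
      ((0 * (a ^ 2 + b ^ 2) - 2 * (α * s1 + β * s2) * (2 * a)) / (a ^ 2 + b ^ 2) ^ 2) a :=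
    (hasDerivAt_const a (2 * (α * s1 + β * s2))).div hq h
  have H := hc.sub ((hn.div hq2 h2))
  unfold Ln La
  refine H.congr_deriv ?_
  simp only [Pi.add_apply, Pi.mul_apply, id]
  field_simp
  ring

lemma hasDerivAt_Ln' (a b : ℝ) (h : a ^ 2 + b ^ 2 ≠ 0) :
    HasDerivAt (fun t => Ln s1 s2 α β a t) (Lb s1 s2 α β a b) b := by
  have hq := sq_add' a b
  have hq2 : HasDerivAt (fun t : ℝ => (a ^ 2 + t ^ 2) ^ 2)
      (2 * (a ^ 2 + b ^ 2) ^ 1 * (2 * b)) b := hq.pow 2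
  have h2 : (a ^ 2 + b ^ 2) ^ 2 ≠ 0 := pow_ne_zero _ h
  have hn := ((lin' β (α * a) b).const_mul 4).mul (lin' s2 (s1 * a) b)
  have hc : HasDerivAt (fun t : ℝ => 2 * (α * s1 + β * s2) / (a ^ 2 + t ^ 2))
      ((0 * (a ^ 2 + b ^ 2) - 2 * (α * s1 + β * s2) * (2 * b)) / (a ^ 2 + b ^ 2) ^ 2) b :=
    (hasDerivAt_const b (2 * (α * s1 + β * s2))).div hq h
  have H := hc.sub ((hn.div hq2 h2))
  unfold Ln Lb
  refine H.congr_deriv ?_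
  simp only [Pi.add_apply, Pi.mul_apply, id]
  field_simp
  ring


noncomputable def Faa (a b : ℝ) : ℝ :=
  -τ / (a ^ 2 + b ^ 2) + 2 * α * s1 / (a ^ 2 + b ^ 2)
    + 2 * τ * a ^ 2 / (a ^ 2 + b ^ 2) ^ 2
    - 4 * a * α * (s1 * a + s2 * b) / (a ^ 2 + b ^ 2) ^ 2
    - 4 * a * (α * a + β * b) * s1 / (a ^ 2 + b ^ 2) ^ 2
    - 2 * (α * a + β * b) * (s1 * a + s2 * b) / (a ^ 2 + b ^ 2) ^ 2
    + 8 * a ^ 2 * (α * a + β * b) * (s1 * a + s2 * b) / (a ^ 2 + b ^ 2) ^ 3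

noncomputable def Fbb (a b : ℝ) : ℝ :=
  -τ / (a ^ 2 + b ^ 2) + 2 * β * s2 / (a ^ 2 + b ^ 2)
    + 2 * τ * b ^ 2 / (a ^ 2 + b ^ 2) ^ 2
    - 4 * b * β * (s1 * a + s2 * b) / (a ^ 2 + b ^ 2) ^ 2
    - 4 * b * (α * a + β * b) * s2 / (a ^ 2 + b ^ 2) ^ 2
    - 2 * (α * a + β * b) * (s1 * a + s2 * b) / (a ^ 2 + b ^ 2) ^ 2
    + 8 * b ^ 2 * (α * a + β * b) * (s1 * a + s2 * b) / (a ^ 2 + b ^ 2) ^ 3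

noncomputable def Laa (a b : ℝ) : ℝ :=
  -4 * (α * s1 + β * s2) / (a ^ 2 + b ^ 2) ^ 2
    + 16 * (α * s1 + β * s2) * a ^ 2 / (a ^ 2 + b ^ 2) ^ 3
    - 8 * α * s1 / (a ^ 2 + b ^ 2) ^ 2
    + 32 * a * (α * (s1 * a + s2 * b) + (α * a + β * b) * s1) / (a ^ 2 + b ^ 2) ^ 3
    + 16 * (α * a + β * b) * (s1 * a + s2 * b) / (a ^ 2 + b ^ 2) ^ 3
    - 96 * a ^ 2 * (α * a + β * b) * (s1 * a + s2 * b) / (a ^ 2 + b ^ 2) ^ 4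

noncomputable def Lbb (a b : ℝ) : ℝ :=
  -4 * (α * s1 + β * s2) / (a ^ 2 + b ^ 2) ^ 2
    + 16 * (α * s1 + β * s2) * b ^ 2 / (a ^ 2 + b ^ 2) ^ 3
    - 8 * β * s2 / (a ^ 2 + b ^ 2) ^ 2
    + 32 * b * (β * (s1 * a + s2 * b) + (α * a + β * b) * s2) / (a ^ 2 + b ^ 2) ^ 3
    + 16 * (α * a + β * b) * (s1 * a + s2 * b) / (a ^ 2 + b ^ 2) ^ 3
    - 96 * b ^ 2 * (α * a + β * b) * (s1 * a + s2 * b) / (a ^ 2 + b ^ 2) ^ 4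

lemma hasDerivAt_Fa (a b : ℝ) (h : a ^ 2 + b ^ 2 ≠ 0) :
    HasDerivAt (fun t => Fa s1 s2 α β τ t b) (Faa s1 s2 α β τ a b) a := by
  have hq := sq_add b a
  have hq2 : HasDerivAt (fun t : ℝ => (t ^ 2 + b ^ 2) ^ 2)
      (2 * (a ^ 2 + b ^ 2) ^ 1 * (2 * a)) a := hq.pow 2
  have h2 : (a ^ 2 + b ^ 2) ^ 2 ≠ 0 := pow_ne_zero _ h
  have t1 := ((hasDerivAt_id a).const_mul (-τ)).div hq h
  have t2 := (((lin s1 (s2 * b) a).const_mul α).add ((lin α (β * b) a).mul_const s1)).div hq h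
  have t3 := ((((hasDerivAt_id a).const_mul 2).mul (lin α (β * b) a)).mul
      (lin s1 (s2 * b) a)).div hq2 h2
  have H := (t1.add t2).sub t3
  unfold Fa Faa
  refine H.congr_deriv ?_
  simp only [Pi.add_apply, Pi.mul_apply, id]
  field_simp
  ring

lemma hasDerivAt_Fb' (a b : ℝ) (h : a ^ 2 + b ^ 2 ≠ 0) :
    HasDerivAt (fun t => Fb s1 s2 α β τ a t) (Fbb s1 s2 α β τ a b) b := by
  have hq := sq_add' a b
  have hq2 : HasDerivAt (fun t : ℝ => (a ^ 2 + t ^ 2) ^ 2)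
      (2 * (a ^ 2 + b ^ 2) ^ 1 * (2 * b)) b := hq.pow 2
  have h2 : (a ^ 2 + b ^ 2) ^ 2 ≠ 0 := pow_ne_zero _ h
  have t1 := ((hasDerivAt_id b).const_mul (-τ)).div hq h
  have t2 := (((lin' s2 (s1 * a) b).const_mul β).add ((lin' β (α * a) b).mul_const s2)).div hq h
  have t3 := ((((hasDerivAt_id b).const_mul 2).mul (lin' β (α * a) b)).mul
      (lin' s2 (s1 * a) b)).div hq2 h2
  have H := (t1.add t2).sub t3
  unfold Fb Fbb
  refine H.congr_deriv ?_
  simp only [Pi.add_apply, Pi.mul_apply, id]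
  field_simp
  ring

lemma hasDerivAt_La (a b : ℝ) (h : a ^ 2 + b ^ 2 ≠ 0) :
    HasDerivAt (fun t => La s1 s2 α β t b) (Laa s1 s2 α β a b) a := by
  have hq := sq_add b a
  have hq2 : HasDerivAt (fun t : ℝ => (t ^ 2 + b ^ 2) ^ 2)
      (2 * (a ^ 2 + b ^ 2) ^ 1 * (2 * a)) a := hq.pow 2
  have hq3 : HasDerivAt (fun t : ℝ => (t ^ 2 + b ^ 2) ^ 3)
      (3 * (a ^ 2 + b ^ 2) ^ 2 * (2 * a)) a := hq.pow 3
  have h2 : (a ^ 2 + b ^ 2) ^ 2 ≠ 0 := pow_ne_zero _ h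
  have h3 : (a ^ 2 + b ^ 2) ^ 3 ≠ 0 := pow_ne_zero _ h
  have t1 := ((hasDerivAt_id a).const_mul (-4 * (α * s1 + β * s2))).div hq2 h2
  have t2 := ((((lin s1 (s2 * b) a).const_mul α).add
      ((lin α (β * b) a).mul_const s1)).const_mul 4).div hq2 h2
  have t3 := ((((hasDerivAt_id a).const_mul 16).mul (lin α (β * b) a)).mul
      (lin s1 (s2 * b) a)).div hq3 h3
  have H := (t1.sub t2).add t3
  unfold La Laa
  refine H.congr_deriv ?_
  simp only [Pi.add_apply, Pi.mul_apply, id]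
  field_simp
  ring

lemma hasDerivAt_Lb' (a b : ℝ) (h : a ^ 2 + b ^ 2 ≠ 0) :
    HasDerivAt (fun t => Lb s1 s2 α β a t) (Lbb s1 s2 α β a b) b := by
  have hq := sq_add' a b
  have hq2 : HasDerivAt (fun t : ℝ => (a ^ 2 + t ^ 2) ^ 2)
      (2 * (a ^ 2 + b ^ 2) ^ 1 * (2 * b)) b := hq.pow 2
  have hq3 : HasDerivAt (fun t : ℝ => (a ^ 2 + t ^ 2) ^ 3)
      (3 * (a ^ 2 + b ^ 2) ^ 2 * (2 * b)) b := hq.pow 3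
  have h2 : (a ^ 2 + b ^ 2) ^ 2 ≠ 0 := pow_ne_zero _ h
  have h3 : (a ^ 2 + b ^ 2) ^ 3 ≠ 0 := pow_ne_zero _ h
  have t1 := ((hasDerivAt_id b).const_mul (-4 * (α * s1 + β * s2))).div hq2 h2
  have t2 := ((((lin' s2 (s1 * a) b).const_mul β).add
      ((lin' β (α * a) b).mul_const s2)).const_mul 4).div hq2 h2
  have t3 := ((((hasDerivAt_id b).const_mul 16).mul (lin' β (α * a) b)).mul
      (lin' s2 (s1 * a) b)).div hq3 h3
  have H := (t1.sub t2).add t3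
  unfold Lb Lbb
  refine H.congr_deriv ?_
  simp only [Pi.add_apply, Pi.mul_apply, id]
  field_simp
  ring

lemma F_sum (a b : ℝ) (h : a ^ 2 + b ^ 2 ≠ 0) :
    Faa s1 s2 α β τ a b + Fbb s1 s2 α β τ a b = Ln s1 s2 α β a b := by
  unfold Faa Fbb Ln
  field_simp
  ring

lemma L_sum (a b : ℝ) (h : a ^ 2 + b ^ 2 ≠ 0) :
    Laa s1 s2 α β a b + Lbb s1 s2 α β a b = 0 := by
  unfold Laa Lbb
  field_simp
  ring

end Aux

section Glue

lemma pd1_congr (H H' : ℝ → ℝ → ℝ) (y : ℝ × ℝ)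
    (hH : ∀ a b : ℝ, a ^ 2 + b ^ 2 ≠ 0 → HasDerivAt (fun t => H t b) (H' a b) a)
    (g : ℝ × ℝ → ℝ)
    (hg : ∀ z : ℝ × ℝ, (z.1 - y.1) ^ 2 + (z.2 - y.2) ^ 2 ≠ 0 →
      g z = H (z.1 - y.1) (z.2 - y.2))
    (x : ℝ × ℝ) (h : (x.1 - y.1) ^ 2 + (x.2 - y.2) ^ 2 ≠ 0) :
    pd1 g x = H' (x.1 - y.1) (x.2 - y.2) := by
  have hc : ContinuousAt (fun t : ℝ => (t - y.1) ^ 2 + (x.2 - y.2) ^ 2) x.1 := by fun_prop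
  have hev : ∀ᶠ t in nhds x.1, (t - y.1) ^ 2 + (x.2 - y.2) ^ 2 ≠ 0 := hc.eventually_ne h
  have hev2 : (fun t => g (t, x.2)) =ᶠ[nhds x.1]
      fun t => H (t - y.1) (x.2 - y.2) := by
    filter_upwards [hev] with t ht
    exact hg (t, x.2) ht
  have hD := (hH (x.1 - y.1) (x.2 - y.2) h).comp x.1 ((hasDerivAt_id x.1).sub_const y.1)
  unfold pd1
  rw [hev2.deriv_eq]
  simpa [Function.comp_def] using hD.deriv

lemma pd2_congr (H H' : ℝ → ℝ → ℝ) (y : ℝ × ℝ)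
    (hH : ∀ a b : ℝ, a ^ 2 + b ^ 2 ≠ 0 → HasDerivAt (fun t => H a t) (H' a b) b)
    (g : ℝ × ℝ → ℝ)
    (hg : ∀ z : ℝ × ℝ, (z.1 - y.1) ^ 2 + (z.2 - y.2) ^ 2 ≠ 0 →
      g z = H (z.1 - y.1) (z.2 - y.2))
    (x : ℝ × ℝ) (h : (x.1 - y.1) ^ 2 + (x.2 - y.2) ^ 2 ≠ 0) :
    pd2 g x = H' (x.1 - y.1) (x.2 - y.2) := by
  have hc : ContinuousAt (fun t : ℝ => (x.1 - y.1) ^ 2 + (t - y.2) ^ 2) x.2 := by fun_prop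
  have hev : ∀ᶠ t in nhds x.2, (x.1 - y.1) ^ 2 + (t - y.2) ^ 2 ≠ 0 := hc.eventually_ne h
  have hev2 : (fun t => g (x.1, t)) =ᶠ[nhds x.2]
      fun t => H (x.1 - y.1) (t - y.2) := by
    filter_upwards [hev] with t ht
    exact hg (x.1, t) ht
  have hD := (hH (x.1 - y.1) (x.2 - y.2) h).comp x.2 ((hasDerivAt_id x.2).sub_const y.2)
  unfold pd2
  rw [hev2.deriv_eq]
  simpa [Function.comp_def] using hD.deriv

lemma biharm_aux (s1 s2 α β τ : ℝ) (y : ℝ × ℝ) (g : ℝ × ℝ → ℝ)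
    (hg : ∀ z : ℝ × ℝ, g z = Fn s1 s2 α β τ (z.1 - y.1) (z.2 - y.2))
    (x : ℝ × ℝ) (h : (x.1 - y.1) ^ 2 + (x.2 - y.2) ^ 2 ≠ 0) :
    lap (lap g) x = 0 := by
  have h1 : ∀ z : ℝ × ℝ, (z.1 - y.1) ^ 2 + (z.2 - y.2) ^ 2 ≠ 0 →
      pd1 g z = Fa s1 s2 α β τ (z.1 - y.1) (z.2 - y.2) := fun z hz =>
    pd1_congr _ _ y (hasDerivAt_Fn s1 s2 α β τ) g (fun z _ => hg z) z hz
  have h2 : ∀ z : ℝ × ℝ, (z.1 - y.1) ^ 2 + (z.2 - y.2) ^ 2 ≠ 0 →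
      pd2 g z = Fb s1 s2 α β τ (z.1 - y.1) (z.2 - y.2) := fun z hz =>
    pd2_congr _ _ y (hasDerivAt_Fn' s1 s2 α β τ) g (fun z _ => hg z) z hz
  have h11 : ∀ z : ℝ × ℝ, (z.1 - y.1) ^ 2 + (z.2 - y.2) ^ 2 ≠ 0 →
      pd1 (pd1 g) z = Faa s1 s2 α β τ (z.1 - y.1) (z.2 - y.2) := fun z hz =>
    pd1_congr _ _ y (hasDerivAt_Fa s1 s2 α β τ) (pd1 g) h1 z hz
  have h22 : ∀ z : ℝ × ℝ, (z.1 - y.1) ^ 2 + (z.2 - y.2) ^ 2 ≠ 0 →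
      pd2 (pd2 g) z = Fbb s1 s2 α β τ (z.1 - y.1) (z.2 - y.2) := fun z hz =>
    pd2_congr _ _ y (hasDerivAt_Fb' s1 s2 α β τ) (pd2 g) h2 z hz
  have hlap : ∀ z : ℝ × ℝ, (z.1 - y.1) ^ 2 + (z.2 - y.2) ^ 2 ≠ 0 →
      lap g z = Ln s1 s2 α β (z.1 - y.1) (z.2 - y.2) := by
    intro z hz
    have : lap g z = pd1 (pd1 g) z + pd2 (pd2 g) z := rfl
    rw [this, h11 z hz, h22 z hz]
    exact F_sum s1 s2 α β τ _ _ hz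
  have hL1 : ∀ z : ℝ × ℝ, (z.1 - y.1) ^ 2 + (z.2 - y.2) ^ 2 ≠ 0 →
      pd1 (lap g) z = La s1 s2 α β (z.1 - y.1) (z.2 - y.2) := fun z hz =>
    pd1_congr _ _ y (hasDerivAt_Ln s1 s2 α β) (lap g) hlap z hz
  have hL2 : ∀ z : ℝ × ℝ, (z.1 - y.1) ^ 2 + (z.2 - y.2) ^ 2 ≠ 0 →
      pd2 (lap g) z = Lb s1 s2 α β (z.1 - y.1) (z.2 - y.2) := fun z hz =>
    pd2_congr _ _ y (hasDerivAt_Ln' s1 s2 α β) (lap g) hlap z hz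
  have hL11 := pd1_congr _ _ y (hasDerivAt_La s1 s2 α β) (pd1 (lap g)) hL1 x h
  have hL22 := pd2_congr _ _ y (hasDerivAt_Lb' s1 s2 α β) (pd2 (lap g)) hL2 x h
  have : lap (lap g) x = pd1 (pd1 (lap g)) x + pd2 (pd2 (lap g)) x := rfl
  rw [this, hL11, hL22]
  exact L_sum s1 s2 α β _ _ h

lemma stokeslet_fst (y σ z : ℝ × ℝ) :
    (stokeslet y σ z).1 = Fn σ.1 σ.2 1 0 σ.1 (z.1 - y.1) (z.2 - y.2) := by
  unfold stokeslet Fn dot nrmsq nrm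
  simp only [Prod.fst_add, Prod.smul_fst, Prod.fst_sub, Prod.snd_sub, smul_eq_mul]
  rw [Real.log_sqrt (by positivity)]
  ring

lemma stokeslet_snd (y σ z : ℝ × ℝ) :
    (stokeslet y σ z).2 = Fn σ.1 σ.2 0 1 σ.2 (z.1 - y.1) (z.2 - y.2) := by
  unfold stokeslet Fn dot nrmsq nrm
  simp only [Prod.snd_add, Prod.smul_snd, Prod.fst_sub, Prod.snd_sub, smul_eq_mul]
  rw [Real.log_sqrt (by positivity)]
  ring

end Glue

theorem stokeslet_biharmonic (y σ : ℝ × ℝ) :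
    ∀ x : ℝ × ℝ, x ≠ y →
      lap (lap (fun z => (stokeslet y σ z).1)) x = 0 ∧
      lap (lap (fun z => (stokeslet y σ z).2)) x = 0 := by
  intro x hxy
  have h : (x.1 - y.1) ^ 2 + (x.2 - y.2) ^ 2 ≠ 0 := by
    intro hc
    have h1 : x.1 = y.1 := by nlinarith [sq_nonneg (x.1 - y.1), sq_nonneg (x.2 - y.2)]
    have h2 : x.2 = y.2 := by nlinarith [sq_nonneg (x.1 - y.1), sq_nonneg (x.2 - y.2)]
    exact hxy (Prod.ext h1 h2)
  exact ⟨biharm_aux σ.1 σ.2 1 0 σ.1 y _ (fun z => stokeslet_fst y σ z) x h,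
    biharm_aux σ.1 σ.2 0 1 σ.2 y _ (fun z => stokeslet_snd y σ z) x h⟩
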